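/- If ρ = Σ_i p_i ρ_A^i ⊗ ρ_B^i is a separable bipartite density matrix on C^d ⊗ C^d with full-rank marginal σ = tr_A[ρ] = Σ_i p_i ρ_B^i, then the channel T associated to ρ by the state-channel duality has Heisenberg picture T*(A) = Σ_i tr[ρ_A^i A] F_i, where F_i = p_i σ^{-1/2} (ρ_B^i)^T σ^{-1/2}. The operators F_i satisfy 0 ≤ F_i ≤ I and Σ_i F_i = I, i.e., {F_i} is a POVM and T is entanglement breaking. -/

import Mathlib

open Matrix BigOperators Kronecker ComplexOrder

noncomputable section

/-- The density matrix σ = Σ_n s_n |n⟩⟨n|, diagonal in its eigenbasis. -/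
def sigmaM (d : ℕ) (s : Fin d → ℝ) : Matrix (Fin d) (Fin d) ℂ :=
  Matrix.diagonal fun n => (s n : ℂ)

/-- σ^{1/2}. -/
def sqrtSigma (d : ℕ) (s : Fin d → ℝ) : Matrix (Fin d) (Fin d) ℂ :=
  Matrix.diagonal fun n => (Real.sqrt (s n) : ℂ)

/-- σ^{-1/2}. -/
def invSqrtSigma (d : ℕ) (s : Fin d → ℝ) : Matrix (Fin d) (Fin d) ℂ :=
  Matrix.diagonal fun n => ((Real.sqrt (s n))⁻¹ : ℂ)

/-- The partial trace over the first (Alice's) tensor factor. -/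
def ptraceA (d : ℕ) (ρ : Matrix (Fin d × Fin d) (Fin d × Fin d) ℂ) :
    Matrix (Fin d) (Fin d) ℂ :=
  Matrix.of fun m m' => ∑ n, ρ (n, m) (n, m')

lemma ptraceA_sum (d k : ℕ) (f : Fin k → Matrix (Fin d × Fin d) (Fin d × Fin d) ℂ) :
    ptraceA d (∑ i, f i) = ∑ i, ptraceA d (f i) := by
  ext m m'
  simp [ptraceA, Matrix.sum_apply]
  exact Finset.sum_comm

lemma ptraceA_smul (d : ℕ) (c : ℂ) (M : Matrix (Fin d × Fin d) (Fin d × Fin d) ℂ) :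
    ptraceA d (c • M) = c • ptraceA d M := by
  ext m m'
  simp [ptraceA, Finset.mul_sum]

lemma ptraceA_kron (d : ℕ) (X Y : Matrix (Fin d) (Fin d) ℂ) :
    ptraceA d (X ⊗ₖ Y) = X.trace • Y := by
  ext m m'
  simp [ptraceA, Matrix.trace, Matrix.diag, Finset.sum_mul]

lemma diag_eq {d : ℕ} (f g : Fin d → ℂ) (h : ∀ n, f n = g n) :
    Matrix.diagonal f = Matrix.diagonal g := by
  rw [funext h]

lemma psd_smul {d : ℕ} {M : Matrix (Fin d) (Fin d) ℂ} (hM : M.PosSemidef) {r : ℝ}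
    (hr : 0 ≤ r) : ((r : ℂ) • M).PosSemidef := by
  constructor
  · unfold Matrix.IsHermitian
    rw [conjTranspose_smul, hM.1.eq]
    simp [Complex.conj_ofReal]
  · intro x
    have hr' : (0 : ℂ) ≤ (r : ℂ) := by exact_mod_cast hr
    convert mul_nonneg hr' (hM.2 x) using 1
    simp only [Finsupp.sum, Finset.mul_sum, Matrix.smul_apply, smul_eq_mul]
    exact Finset.sum_congr rfl fun i _ => Finset.sum_congr rfl fun j _ => by ring

/-- For a separable state ρ = Σ_i p_i ρ_A^i ⊗ ρ_B^i with full-rank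
marginal σ = Σ_i p_i ρ_B^i (diagonal with entries s_n > 0), the dual channel
T*(A) = Σ_i tr[ρ_A^i A] F_i with F_i = p_i σ^{-1/2}(ρ_B^i)ᵀσ^{-1/2} satisfies the duality
relation σ^{1/2}T*(A)σ^{1/2} = tr_A[ρ(A⊗I)]ᵀ, and {F_i} is a POVM: 0 ≤ F_i ≤ I and
Σ_i F_i = I (so T is entanglement breaking). -/
theorem stmt18 (d k : ℕ) (s : Fin d → ℝ) (hs : ∀ n, 0 < s n) (hsum : ∑ n, s n = 1)
    (p : Fin k → ℝ) (hp : ∀ i, 0 ≤ p i) (hpsum : ∑ i, p i = 1)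
    (ρA ρB : Fin k → Matrix (Fin d) (Fin d) ℂ)
    (hA : ∀ i, (ρA i).PosSemidef ∧ (ρA i).trace = 1)
    (hB : ∀ i, (ρB i).PosSemidef ∧ (ρB i).trace = 1)
    (ρ : Matrix (Fin d × Fin d) (Fin d × Fin d) ℂ)
    (hρ : ρ = ∑ i, ((p i : ℝ) : ℂ) • (ρA i ⊗ₖ ρB i))
    (hσ : ∑ i, ((p i : ℝ) : ℂ) • ρB i = sigmaM d s)
    (F : Fin k → Matrix (Fin d) (Fin d) ℂ)
    (hF : ∀ i, F i = ((p i : ℝ) : ℂ) • (invSqrtSigma d s * (ρB i)ᵀ * invSqrtSigma d s)) :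
    (∀ A : Matrix (Fin d) (Fin d) ℂ,
      sqrtSigma d s * (∑ i, ((ρA i * A).trace) • F i) * sqrtSigma d s
        = (ptraceA d (ρ * (A ⊗ₖ (1 : Matrix (Fin d) (Fin d) ℂ))))ᵀ) ∧
    (∀ i, (F i).PosSemidef ∧ ((1 : Matrix (Fin d) (Fin d) ℂ) - F i).PosSemidef) ∧
    (∑ i, F i = 1) := by
  have hsqrt_ne : ∀ n, Real.sqrt (s n) ≠ 0 := fun n =>
    ne_of_gt (Real.sqrt_pos.mpr (hs n))
  -- sqrtSigma * invSqrtSigma = 1 (and commuted)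
  have hsqrtC_ne : ∀ n, ((Real.sqrt (s n) : ℝ) : ℂ) ≠ 0 := fun n => by
    exact_mod_cast hsqrt_ne n
  have hSI : sqrtSigma d s * invSqrtSigma d s = 1 := by
    rw [sqrtSigma, invSqrtSigma, diagonal_mul_diagonal, ← Matrix.diagonal_one]
    exact diag_eq _ _ fun n => mul_inv_cancel₀ (hsqrtC_ne n)
  have hIS : invSqrtSigma d s * sqrtSigma d s = 1 := by
    rw [invSqrtSigma, sqrtSigma, diagonal_mul_diagonal, ← Matrix.diagonal_one]
    exact diag_eq _ _ fun n => inv_mul_cancel₀ (hsqrtC_ne n)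
  -- invSqrtSigma * sigmaM * invSqrtSigma = 1
  have hIsI : invSqrtSigma d s * sigmaM d s * invSqrtSigma d s = 1 := by
    rw [invSqrtSigma, sigmaM, diagonal_mul_diagonal, diagonal_mul_diagonal,
      ← Matrix.diagonal_one]
    refine diag_eq _ _ fun n => ?_
    have hc : ((Real.sqrt (s n) : ℝ) : ℂ) * ((Real.sqrt (s n) : ℝ) : ℂ) = ((s n : ℝ) : ℂ) := by
      rw [← Complex.ofReal_mul, Real.mul_self_sqrt (hs n).le]
    rw [← hc]
    field_simp
    exact div_self (hsqrtC_ne n)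
  -- key conjugation identity
  have key : ∀ i, sqrtSigma d s * F i * sqrtSigma d s = ((p i : ℝ) : ℂ) • (ρB i)ᵀ := by
    intro i
    rw [hF i, Matrix.mul_smul, Matrix.smul_mul]
    congr 1
    calc sqrtSigma d s * (invSqrtSigma d s * (ρB i)ᵀ * invSqrtSigma d s) * sqrtSigma d s
        = (sqrtSigma d s * invSqrtSigma d s) * (ρB i)ᵀ *
            (invSqrtSigma d s * sqrtSigma d s) := by
          simp only [Matrix.mul_assoc]
      _ = (ρB i)ᵀ := by rw [hSI, hIS, Matrix.one_mul, Matrix.mul_one]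
  -- sum of F is 1
  have hsumF : ∑ i, F i = 1 := by
    have : ∑ i, F i
        = invSqrtSigma d s * (∑ i, ((p i : ℝ) : ℂ) • ρB i)ᵀ * invSqrtSigma d s := by
      rw [Matrix.transpose_sum, Finset.mul_sum, Finset.sum_mul]
      refine Finset.sum_congr rfl fun i _ => ?_
      rw [hF i, Matrix.transpose_smul, Matrix.mul_smul, Matrix.smul_mul]
    rw [this, hσ]
    have hσT : (sigmaM d s)ᵀ = sigmaM d s := by
      rw [sigmaM, Matrix.diagonal_transpose]
    rw [hσT, hIsI]
  refine ⟨?_, ?_, hsumF⟩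
  · -- duality relation
    intro A
    have lhs_eq : sqrtSigma d s * (∑ i, ((ρA i * A).trace) • F i) * sqrtSigma d s
        = ∑ i, ((ρA i * A).trace) • (((p i : ℝ) : ℂ) • (ρB i)ᵀ) := by
      rw [Finset.mul_sum, Finset.sum_mul]
      refine Finset.sum_congr rfl fun i _ => ?_
      rw [Matrix.mul_smul, Matrix.smul_mul, key i]
    rw [lhs_eq, hρ, Finset.sum_mul]
    have hterm : ∀ i, (((p i : ℝ) : ℂ) • (ρA i ⊗ₖ ρB i)) * (A ⊗ₖ (1 : Matrix (Fin d) (Fin d) ℂ))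
        = ((p i : ℝ) : ℂ) • ((ρA i * A) ⊗ₖ ρB i) := by
      intro i
      rw [Matrix.smul_mul, ← Matrix.mul_kronecker_mul, Matrix.mul_one]
    simp_rw [hterm]
    rw [ptraceA_sum]
    simp_rw [ptraceA_smul, ptraceA_kron]
    rw [Matrix.transpose_sum]
    refine Finset.sum_congr rfl fun i _ => ?_
    rw [Matrix.transpose_smul, Matrix.transpose_smul]
    rw [smul_smul, smul_smul, mul_comm]
  · -- POVM properties
    have hherm : (invSqrtSigma d s)ᴴ = invSqrtSigma d s := by
      rw [invSqrtSigma, Matrix.diagonal_conjTranspose]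
      have : (star fun n => ((Real.sqrt (s n))⁻¹ : ℂ))
          = fun n => ((Real.sqrt (s n))⁻¹ : ℂ) := by
        funext n
        simp [Pi.star_apply, Complex.conj_ofReal]
      rw [this]
    have hFpsd : ∀ j, (F j).PosSemidef := by
      intro j
      rw [hF j]
      have := ((hB j).1.transpose).mul_mul_conjTranspose_same (invSqrtSigma d s)
      rw [hherm] at this
      exact psd_smul this (hp j)
    intro i
    refine ⟨hFpsd i, ?_⟩
    have : (1 : Matrix (Fin d) (Fin d) ℂ) - F i = ∑ j ∈ Finset.univ.erase i, F j := by
      rw [← hsumF, ← Finset.add_sum_erase _ F (Finset.mem_univ i)]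
      exact add_sub_cancel_left _ _
    rw [this]
    exact Finset.sum_induction _ _ (fun a b ha hb => ha.add hb) Matrix.PosSemidef.zero
      fun j _ => hFpsd j
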